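/- For all θ, φ ∈ [0,π] and all u, v ∈ [0,1], (2/π²)·[θφ·(1−u) + (π−θ)(π−φ)·(1−v)] ≤ F_{θ,φ}(u,v) − F_{θ,φ}(1,1) ≤ (1/2)·[θφ·(1−u) + (π−θ)(π−φ)·(1−v)]. -/

import Mathlib

open Real

section
open Set

lemma my_sinc_anti {x y : ℝ} (hx : 0 < x) (hxy : x ≤ y) (hy : y ≤ π) :
    sin y / y ≤ sin x / x := by
  rcases eq_or_lt_of_le hxy with rfl | hlt
  · exact le_refl _
  have key : AntitoneOn (fun z => sin z / z) (Icc x π) := by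
    apply antitoneOn_of_deriv_nonpos (convex_Icc x π)
    · exact Real.continuous_sin.continuousOn.div continuousOn_id
        (fun z hz => (lt_of_lt_of_le hx hz.1).ne')
    · rw [interior_Icc]
      intro z hz
      have hz0 : z ≠ 0 := (lt_trans hx hz.1).ne'
      exact ((Real.hasDerivAt_sin z).div (hasDerivAt_id z) hz0).differentiableAt.differentiableWithinAt
    · rw [interior_Icc]
      intro z hz
      have hz0 : (0:ℝ) < z := lt_trans hx hz.1
      have hd : HasDerivAt (fun z => sin z / z) ((cos z * z - sin z * 1) / z ^ 2) z :=
        (Real.hasDerivAt_sin z).div (hasDerivAt_id z) hz0.ne'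
      rw [hd.deriv]
      have hnum : cos z * z ≤ sin z := by
        rcases lt_or_ge z (π/2) with h | h
        · have hc : 0 < cos z := Real.cos_pos_of_mem_Ioo ⟨by linarith, h⟩
          have ht := Real.lt_tan hz0 h
          rw [Real.tan_eq_sin_div_cos, lt_div_iff₀ hc] at ht
          nlinarith
        · have hzπ : z < π := hz.2
          have hc : cos z ≤ 0 := Real.cos_nonpos_of_pi_div_two_le_of_le h (by linarith)
          have hs : 0 ≤ sin z := Real.sin_nonneg_of_nonneg_of_le_pi hz0.le hzπ.le
          nlinarith
      have : (0:ℝ) < z ^ 2 := by positivity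
      apply div_nonpos_of_nonpos_of_nonneg <;> nlinarith
  exact key ⟨le_refl x, by linarith⟩ ⟨hxy, hy⟩ hxy

lemma my_cos_sqrt_convex : ConvexOn ℝ (Icc (0:ℝ) (π^2)) (fun z => cos (Real.sqrt z)) := by
  apply MonotoneOn.convexOn_of_deriv (convex_Icc _ _)
  · exact (Real.continuous_cos.comp Real.continuous_sqrt).continuousOn
  · rw [interior_Icc]
    intro z hz
    exact (((Real.hasDerivAt_cos (Real.sqrt z)).comp z
      (Real.hasDerivAt_sqrt hz.1.ne'))).differentiableAt.differentiableWithinAt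
  · rw [interior_Icc]
    intro z1 hz1 z2 hz2 h12
    have hd1 : HasDerivAt (fun z => cos (Real.sqrt z)) (-sin (Real.sqrt z1) * (1 / (2 * Real.sqrt z1))) z1 :=
      (Real.hasDerivAt_cos (Real.sqrt z1)).comp z1 (Real.hasDerivAt_sqrt hz1.1.ne')
    have hd2 : HasDerivAt (fun z => cos (Real.sqrt z)) (-sin (Real.sqrt z2) * (1 / (2 * Real.sqrt z2))) z2 :=
      (Real.hasDerivAt_cos (Real.sqrt z2)).comp z2 (Real.hasDerivAt_sqrt hz2.1.ne')
    rw [hd1.deriv, hd2.deriv]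
    have h1p : 0 < Real.sqrt z1 := Real.sqrt_pos.2 hz1.1
    have h2p : 0 < Real.sqrt z2 := Real.sqrt_pos.2 hz2.1
    have hle : Real.sqrt z1 ≤ Real.sqrt z2 := Real.sqrt_le_sqrt h12
    have hpi : Real.sqrt z2 ≤ π := by
      calc Real.sqrt z2 ≤ Real.sqrt (π^2) := Real.sqrt_le_sqrt hz2.2.le
      _ = π := Real.sqrt_sq Real.pi_pos.le
    have key := my_sinc_anti h1p hle hpi
    rw [div_le_div_iff₀ h2p h1p] at key
    rw [neg_mul, neg_mul, mul_one_div, mul_one_div, neg_le_neg_iff]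
    rw [div_le_div_iff₀ (by positivity) (by positivity)]
    nlinarith

lemma my_pyth {s t : ℝ} (hs0 : 0 ≤ s) (hs : s ≤ π/2) (ht0 : 0 ≤ t) (ht : t ≤ π/2) :
    arccos (cos s * cos t) ^ 2 ≤ s^2 + t^2 := by
  have hπ := Real.pi_pos
  have hA : ((s-t)^2 : ℝ) ∈ Icc (0:ℝ) (π^2) := by
    constructor; positivity; nlinarith
  have hB : ((s+t)^2 : ℝ) ∈ Icc (0:ℝ) (π^2) := by
    constructor; positivity; nlinarith
  have hmid := my_cos_sqrt_convex.2 hA hB (by norm_num : (0:ℝ) ≤ 1/2) (by norm_num : (0:ℝ) ≤ 1/2) (by norm_num)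
  simp only [smul_eq_mul] at hmid
  have hmix : (1/2 : ℝ) * ((s-t)^2) + (1/2) * ((s+t)^2) = s^2 + t^2 := by ring
  rw [hmix] at hmid
  have hcA : cos (Real.sqrt ((s-t)^2)) = cos (s - t) := by
    rw [Real.sqrt_sq_eq_abs, Real.cos_abs]
  have hcB : cos (Real.sqrt ((s+t)^2)) = cos (s + t) := by
    rw [Real.sqrt_sq (by linarith)]
  rw [hcA, hcB] at hmid
  have hprod : (1/2 : ℝ) * cos (s - t) + (1/2) * cos (s + t) = cos s * cos t := by
    rw [Real.cos_sub, Real.cos_add]; ring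
  rw [hprod] at hmid
  -- hmid : cos (sqrt (s^2+t^2)) ≤ cos s * cos t
  have hr0 : 0 ≤ Real.sqrt (s^2 + t^2) := Real.sqrt_nonneg _
  have hrπ : Real.sqrt (s^2 + t^2) ≤ π := by
    calc Real.sqrt (s^2+t^2) ≤ Real.sqrt (π^2) := Real.sqrt_le_sqrt (by nlinarith)
    _ = π := Real.sqrt_sq Real.pi_pos.le
  have hanti : arccos (cos s * cos t) ≤ arccos (cos (Real.sqrt (s^2+t^2))) := by
    unfold Real.arccos
    have := Real.monotone_arcsin hmid
    linarith
  rw [Real.arccos_cos hr0 hrπ] at hanti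
  have h0 : 0 ≤ arccos (cos s * cos t) := Real.arccos_nonneg _
  calc arccos (cos s * cos t) ^ 2 ≤ (Real.sqrt (s^2+t^2))^2 := by nlinarith
  _ = s^2 + t^2 := Real.sq_sqrt (by positivity)

lemma my_arccos_sq_convex : ConvexOn ℝ (Icc (0:ℝ) 1) (fun x => arccos x ^ 2) := by
  apply MonotoneOn.convexOn_of_deriv (convex_Icc _ _)
  · exact (Real.continuous_arccos.pow 2).continuousOn
  · rw [interior_Icc]
    intro x hx
    have h1 : x ≠ -1 := by intro h; rw [h] at hx; linarith [hx.1]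
    have h2 : x ≠ 1 := hx.2.ne
    exact ((Real.hasDerivAt_arccos h1 h2).pow 2).differentiableAt.differentiableWithinAt
  · rw [interior_Icc]
    intro x hx y hy hxy
    have hx1 : x ≠ -1 := by intro h; rw [h] at hx; linarith [hx.1]
    have hx2 : x ≠ 1 := hx.2.ne
    have hy1 : y ≠ -1 := by intro h; rw [h] at hy; linarith [hy.1]
    have hy2 : y ≠ 1 := hy.2.ne
    have hdx := ((Real.hasDerivAt_arccos hx1 hx2).pow 2).deriv
    have hdy := ((Real.hasDerivAt_arccos hy1 hy2).pow 2).deriv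
    show deriv (arccos ^ 2) x ≤ deriv (arccos ^ 2) y
    rw [hdx, hdy]
    have hsx : Real.sqrt (1 - x^2) = sin (arccos x) := (Real.sin_arccos x).symm
    have hsy : Real.sqrt (1 - y^2) = sin (arccos y) := (Real.sin_arccos y).symm
    set A := arccos x with hA
    set B := arccos y with hB
    have hApos : 0 < A := Real.arccos_pos.2 hx.2
    have hBpos : 0 < B := Real.arccos_pos.2 hy.2
    have hAlt : A ≤ π/2 := Real.arccos_le_pi_div_two.2 hx.1.le
    have hBA : B ≤ A := by
      rw [hA, hB]; unfold Real.arccos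
      linarith [Real.monotone_arcsin hxy]
    have hsinA : 0 < sin A := Real.sin_pos_of_pos_of_lt_pi hApos (by linarith [Real.pi_pos])
    have hsinB : 0 < sin B := Real.sin_pos_of_pos_of_lt_pi hBpos (by linarith [Real.pi_pos])
    have key := my_sinc_anti hBpos hBA (by linarith [Real.pi_pos])
    rw [div_le_div_iff₀ hApos hBpos] at key
    rw [hsx, hsy]
    have e : ∀ C : ℝ, 0 < sin C → (2:ℕ) * C ^ 1 * -(1 / sin C) = -(2 * (C / sin C)) := by
      intro C hC; field_simp; push_cast; ring
    rw [e A hsinA, e B hsinB, neg_le_neg_iff]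
    have : B / sin B ≤ A / sin A := by
      rw [div_le_div_iff₀ hsinB hsinA]; nlinarith
    linarith

end

/-- The function `F_{θ,φ}(u,v)`. -/
noncomputable def Ffun (θ φ u v : ℝ) : ℝ :=
  (Real.arccos (u * Real.sin (θ/2) * Real.sin (φ/2) + v * Real.cos (θ/2) * Real.cos (φ/2))) ^ 2

theorem Ffun_difference_bounds (θ φ : ℝ) (hθ : θ ∈ Set.Icc (0 : ℝ) π)
    (hφ : φ ∈ Set.Icc (0 : ℝ) π) (u v : ℝ) (hu : u ∈ Set.Icc (0 : ℝ) 1)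
    (hv : v ∈ Set.Icc (0 : ℝ) 1) :
    2 / π ^ 2 * (θ * φ * (1 - u) + (π - θ) * (π - φ) * (1 - v)) ≤
      Ffun θ φ u v - Ffun θ φ 1 1 ∧
    Ffun θ φ u v - Ffun θ φ 1 1 ≤
      1 / 2 * (θ * φ * (1 - u) + (π - θ) * (π - φ) * (1 - v)) := by
  obtain ⟨hθ0, hθπ⟩ := hθ
  obtain ⟨hφ0, hφπ⟩ := hφ
  obtain ⟨hu0, hu1⟩ := hu
  obtain ⟨hv0, hv1⟩ := hv
  have hπ := Real.pi_pos
  set a := sin (θ/2) * sin (φ/2) with ha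
  set b := cos (θ/2) * cos (φ/2) with hb
  have hsθ : 0 ≤ sin (θ/2) :=
    Real.sin_nonneg_of_nonneg_of_le_pi (by linarith only [hθ0]) (by linarith only [hθπ, hπ])
  have hsφ : 0 ≤ sin (φ/2) :=
    Real.sin_nonneg_of_nonneg_of_le_pi (by linarith only [hφ0]) (by linarith only [hφπ, hπ])
  have hcθ : 0 ≤ cos (θ/2) :=
    Real.cos_nonneg_of_mem_Icc ⟨by linarith only [hθ0, hπ], by linarith only [hθπ]⟩
  have hcφ : 0 ≤ cos (φ/2) :=
    Real.cos_nonneg_of_mem_Icc ⟨by linarith only [hφ0, hπ], by linarith only [hφπ]⟩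
  have ha0 : 0 ≤ a := mul_nonneg hsθ hsφ
  have hb0 : 0 ≤ b := mul_nonneg hcθ hcφ
  have hab : a + b = cos ((θ - φ)/2) := by
    rw [show (θ - φ)/2 = θ/2 - φ/2 by ring, Real.cos_sub, ha, hb]; ring
  have hab1 : a + b ≤ 1 := by rw [hab]; exact Real.cos_le_one _
  have hua : u * a ≤ a := by
    have h := mul_le_mul_of_nonneg_right hu1 ha0; rw [one_mul] at h; exact h
  have hvb : v * b ≤ b := by
    have h := mul_le_mul_of_nonneg_right hv1 hb0; rw [one_mul] at h; exact h
  have hw0 : 0 ≤ u * a + v * b := add_nonneg (mul_nonneg hu0 ha0) (mul_nonneg hv0 hb0)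
  have hwab : u * a + v * b ≤ a + b := by linarith only [hua, hvb]
  have hw1 : u * a + v * b ≤ 1 := le_trans hwab hab1
  have hwm1 : (-1:ℝ) ≤ u * a + v * b := by linarith only [hw0]
  have habs2 : arccos (a+b) ^ 2 = (θ - φ)^2/4 := by
    rw [hab]
    rcases le_total 0 ((θ - φ)/2) with h | h
    · rw [Real.arccos_cos h (by linarith only [hθπ, hφ0, hπ])]; ring
    · rw [show cos ((θ-φ)/2) = cos (-((θ-φ)/2)) by rw [Real.cos_neg],
        Real.arccos_cos (by linarith only [h]) (by linarith only [hθ0, hφπ, hπ])]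
      ring
  have hF11 : Ffun θ φ 1 1 = (θ - φ)^2/4 := by
    have e : 1 * sin (θ/2) * sin (φ/2) + 1 * cos (θ/2) * cos (φ/2) = a + b := by
      rw [ha, hb]; ring
    rw [Ffun, e, habs2]
  have hFuv : Ffun θ φ u v = arccos (u * a + v * b) ^ 2 := by
    have e : u * sin (θ/2) * sin (φ/2) + v * cos (θ/2) * cos (φ/2) = u * a + v * b := by
      rw [ha, hb]; ring
    rw [Ffun, e]
  set D := arccos (a + b) with hD
  set α := arccos (u*a + v*b) with hα
  have hD0 : 0 ≤ D := Real.arccos_nonneg _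
  have hα0 : 0 ≤ α := Real.arccos_nonneg _
  have hαπ : α ≤ π := Real.arccos_le_pi _
  have hDπ : D ≤ π := Real.arccos_le_pi _
  have hDα : D ≤ α := by
    rw [hD, hα]
    have h := Real.monotone_arcsin hwab
    unfold Real.arccos
    linarith only [h]
  have hcosD : cos D = a + b := by
    rw [hD]; exact Real.cos_arccos (by linarith only [hw0, hwab]) hab1
  have hcosα : cos α = u*a + v*b := by
    rw [hα]; exact Real.cos_arccos hwm1 hw1
  have hDsq : D^2 = (θ-φ)^2/4 := habs2
  constructor
  · -- lower bound
    have h1 : cos D - cos α = 2 * sin ((α + D)/2) * sin ((α - D)/2) := by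
      rw [Real.cos_sub_cos,
        show (D - α)/2 = -((α - D)/2) by ring, Real.sin_neg,
        show (D + α)/2 = (α + D)/2 by ring]
      ring
    have hs1 : sin ((α + D)/2) ≤ (α + D)/2 := Real.sin_le (by linarith only [hα0, hD0])
    have hs2 : sin ((α - D)/2) ≤ (α - D)/2 := Real.sin_le (by linarith only [hDα])
    have hs2' : 0 ≤ sin ((α - D)/2) :=
      Real.sin_nonneg_of_nonneg_of_le_pi (by linarith only [hDα]) (by linarith only [hαπ, hD0, hπ])
    have hmul : sin ((α + D)/2) * sin ((α - D)/2) ≤ ((α + D)/2) * ((α - D)/2) :=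
      mul_le_mul hs1 hs2 hs2' (by linarith only [hα0, hD0])
    have hkey : cos D - cos α ≤ (α^2 - D^2)/2 := by nlinarith only [h1, hmul]
    have haJ : θ * φ / π^2 ≤ a := by
      have h1 := Real.mul_le_sin (x := θ/2) (by linarith only [hθ0]) (by linarith only [hθπ])
      have h2 := Real.mul_le_sin (x := φ/2) (by linarith only [hφ0]) (by linarith only [hφπ])
      have e : θ * φ / π^2 = (2/π * (θ/2)) * (2/π * (φ/2)) := by
        field_simp
      rw [ha, e]
      exact mul_le_mul h1 h2
        (mul_nonneg (by positivity) (by linarith only [hφ0])) hsθ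
    have hbJ : (π - θ) * (π - φ) / π^2 ≤ b := by
      have e1 : cos (θ/2) = sin ((π - θ)/2) := by
        rw [show (π - θ)/2 = π/2 - θ/2 by ring, Real.sin_pi_div_two_sub]
      have e2 : cos (φ/2) = sin ((π - φ)/2) := by
        rw [show (π - φ)/2 = π/2 - φ/2 by ring, Real.sin_pi_div_two_sub]
      have h1 := Real.mul_le_sin (x := (π-θ)/2) (by linarith only [hθπ]) (by linarith only [hθ0])
      have h2 := Real.mul_le_sin (x := (π-φ)/2) (by linarith only [hφπ]) (by linarith only [hφ0])
      have e : (π-θ) * (π-φ) / π^2 = (2/π * ((π-θ)/2)) * (2/π * ((π-φ)/2)) := by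
        field_simp
      rw [hb, e1, e2, e]
      exact mul_le_mul h1 h2
        (mul_nonneg (by positivity) (by linarith only [hφπ]))
        (Real.sin_nonneg_of_nonneg_of_le_pi (by linarith only [hθπ]) (by linarith only [hθ0, hπ]))
    rw [hFuv, hF11, ← hDsq]
    have hkey2 : a * (1-u) + b * (1-v) ≤ (α^2 - D^2)/2 := by
      have e : cos D - cos α = a*(1-u) + b*(1-v) := by rw [hcosD, hcosα]; ring
      linarith only [hkey, e]
    have m1 : θ*φ/π^2 * (1-u) ≤ a * (1-u) :=
      mul_le_mul_of_nonneg_right haJ (by linarith only [hu1])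
    have m2 : (π-θ)*(π-φ)/π^2 * (1-v) ≤ b * (1-v) :=
      mul_le_mul_of_nonneg_right hbJ (by linarith only [hv1])
    have e : 2/π^2 * (θ*φ*(1-u) + (π-θ)*(π-φ)*(1-v))
        = 2*(θ*φ/π^2*(1-u)) + 2*((π-θ)*(π-φ)/π^2*(1-v)) := by
      field_simp
    rw [e]
    linarith only [m1, m2, hkey2]
  · -- upper bound
    have hcvx := my_arccos_sq_convex
    have ha1 : a ≤ 1 := by linarith only [hab1, hb0]
    have hb1 : b ≤ 1 := by linarith only [hab1, ha0]
    have hbv0 : 0 ≤ b*(1-v) := mul_nonneg hb0 (by linarith only [hv1])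
    have hc1 : a + b - b*(1-v) ∈ Set.Icc (0:ℝ) 1 := by
      constructor
      · have h : a + b - b*(1-v) = a + b*v := by ring
        rw [h]; exact add_nonneg ha0 (mul_nonneg hb0 hv0)
      · linarith only [hab1, hbv0]
    have hc2 : b*v ∈ Set.Icc (0:ℝ) 1 := by
      constructor
      · exact mul_nonneg hb0 hv0
      · have h := mul_le_mul_of_nonneg_left hv1 hb0
        rw [mul_one] at h
        linarith only [h, hb1]
    have hmemab : (a + b) ∈ Set.Icc (0:ℝ) 1 := ⟨by linarith only [ha0, hb0], hab1⟩
    have hmema : a ∈ Set.Icc (0:ℝ) 1 := ⟨ha0, ha1⟩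
    have hmemb : b ∈ Set.Icc (0:ℝ) 1 := ⟨hb0, hb1⟩
    have hmem0 : (0:ℝ) ∈ Set.Icc (0:ℝ) 1 := ⟨le_refl _, by norm_num⟩
    have step1 : α ^ 2 ≤
        u * arccos (a + b - b*(1-v)) ^ 2 + (1-u) * arccos (b*v) ^ 2 := by
      have h := hcvx.2 hc1 hc2 hu0 (by linarith only [hu1] : (0:ℝ) ≤ 1-u) (by ring)
      simp only [smul_eq_mul] at h
      have harg : u * (a + b - b*(1-v)) + (1-u) * (b*v) = u*a + v*b := by ring
      rw [harg] at h
      rw [hα]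
      exact h
    have step2 : arccos (a + b - b*(1-v)) ^ 2 ≤
        v * D ^ 2 + (1-v) * arccos a ^ 2 := by
      have h := hcvx.2 hmemab hmema hv0 (by linarith only [hv1] : (0:ℝ) ≤ 1-v) (by ring)
      simp only [smul_eq_mul] at h
      have harg : v * (a + b) + (1-v) * a = a + b - b*(1-v) := by ring
      rw [harg] at h
      rw [hD]
      exact h
    have step3 : arccos (b*v) ^ 2 ≤ v * arccos b ^ 2 + (1-v) * arccos 0 ^ 2 := by
      have h := hcvx.2 hmemb hmem0 hv0 (by linarith only [hv1] : (0:ℝ) ≤ 1-v) (by ring)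
      simp only [smul_eq_mul] at h
      have harg : v * b + (1-v) * 0 = b*v := by ring
      rw [harg] at h
      exact h
    have hga : arccos a ^ 2 ≤ (θ-φ)^2/4 + (π-θ)*(π-φ)/2 := by
      have e : a = cos ((π-θ)/2) * cos ((π-φ)/2) := by
        rw [ha, show (π-θ)/2 = π/2 - θ/2 by ring, show (π-φ)/2 = π/2 - φ/2 by ring,
          Real.cos_pi_div_two_sub, Real.cos_pi_div_two_sub]
      have h := my_pyth (s := (π-θ)/2) (t := (π-φ)/2)
        (by linarith only [hθπ]) (by linarith only [hθ0]) (by linarith only [hφπ])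
        (by linarith only [hφ0])
      rw [← e] at h
      linarith only [h]
    have hgb : arccos b ^ 2 ≤ (θ-φ)^2/4 + θ*φ/2 := by
      have h := my_pyth (s := θ/2) (t := φ/2)
        (by linarith only [hθ0]) (by linarith only [hθπ]) (by linarith only [hφ0])
        (by linarith only [hφπ])
      rw [hb]
      linarith only [h]
    have hg0 : arccos (0:ℝ) ^ 2 = π^2/4 := by rw [Real.arccos_zero]; ring
    have hπ4 : arccos (0:ℝ) ^ 2 ≤ (θ-φ)^2/4 + θ*φ/2 + (π-θ)*(π-φ)/2 := by
      rw [hg0]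
      nlinarith only [sq_nonneg (θ+φ-π)]
    have c2 : arccos (a + b - b*(1-v)) ^ 2 ≤
        v * ((θ-φ)^2/4) + (1-v) * ((θ-φ)^2/4 + (π-θ)*(π-φ)/2) := by
      have m1 := mul_le_mul_of_nonneg_left hga (by linarith only [hv1] : (0:ℝ) ≤ 1-v)
      have m2 : v * D^2 = v * ((θ-φ)^2/4) := by rw [hDsq]
      linarith only [step2, m1, m2]
    have c3 : arccos (b*v) ^ 2 ≤
        v * ((θ-φ)^2/4 + θ*φ/2) + (1-v) * ((θ-φ)^2/4 + θ*φ/2 + (π-θ)*(π-φ)/2) := by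
      have m1 := mul_le_mul_of_nonneg_left hgb hv0
      have m2 := mul_le_mul_of_nonneg_left hπ4 (by linarith only [hv1] : (0:ℝ) ≤ 1-v)
      linarith only [step3, m1, m2]
    have final : α ^ 2 ≤
        u * (v * ((θ-φ)^2/4) + (1-v) * ((θ-φ)^2/4 + (π-θ)*(π-φ)/2))
        + (1-u) * (v * ((θ-φ)^2/4 + θ*φ/2) + (1-v) * ((θ-φ)^2/4 + θ*φ/2 + (π-θ)*(π-φ)/2)) := by
      have m1 := mul_le_mul_of_nonneg_left c2 hu0
      have m2 := mul_le_mul_of_nonneg_left c3 (by linarith only [hu1] : (0:ℝ) ≤ 1-u)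
      linarith only [step1, m1, m2]
    rw [hFuv, hF11]
    linarith only [final]
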